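/- arXiv:2407.19972 — 2 statements merged into one kernel-verified Lean document; each statement's English description precedes it below -/
import Mathlib

section
/- There is an absolute constant C such that for all ξ > 0, all κ > 0, and all a ∈ (0, 1/2), the principal value integral satisfies |p.v. ∫_{-aξ}^{aξ} e^{i(η² + 2ξη)κ} / η dη| ≤ C, where p.v. denotes the limit as ε → 0+ of the integral over {ε ≤ |η| ≤ aξ}. -/
open MeasureTheory Filter Set

lemma abs_exp_I_sub_one (θ : ℝ) : ‖Complex.exp (Complex.I * θ) - 1‖ ≤ |θ| := by
  have h1 : Complex.exp (Complex.I * θ) = Real.cos θ + Real.sin θ * Complex.I := by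
    rw [mul_comm, Complex.exp_mul_I]; push_cast; ring
  have h2 : ‖Complex.exp (Complex.I * θ) - 1‖ ^ 2
      = (Real.cos θ - 1) ^ 2 + Real.sin θ ^ 2 := by
    rw [h1]
    have : (Real.cos θ : ℂ) + Real.sin θ * Complex.I - 1
        = ((Real.cos θ - 1 : ℝ) : ℂ) + (Real.sin θ : ℝ) * Complex.I := by push_cast; ring
    rw [this, Complex.sq_norm, Complex.normSq_add_mul_I]
  have h3 : (Real.cos θ - 1) ^ 2 + Real.sin θ ^ 2 ≤ |θ| ^ 2 := by
    rw [sq_abs]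
    have := Real.sin_sq_add_cos_sq θ
    have := Real.one_sub_sq_div_two_le_cos (x := θ)
    nlinarith
  have h4 := h2.trans_le h3
  exact pow_le_pow_iff_left₀ (norm_nonneg _) (abs_nonneg θ) two_ne_zero |>.mp h4

lemma abs_exp_I_sub_exp_I (A B : ℝ) :
    ‖Complex.exp (Complex.I * A) - Complex.exp (Complex.I * B)‖ ≤ |A - B| := by
  have : Complex.exp (Complex.I * A) - Complex.exp (Complex.I * B)
      = Complex.exp (Complex.I * B) * (Complex.exp (Complex.I * ((A - B : ℝ) : ℂ)) - 1) := by
    rw [mul_sub, ← Complex.exp_add]; push_cast; ring_nf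
  rw [this, norm_mul, Complex.norm_exp]
  have : (Complex.I * ((B:ℝ):ℂ)).re = 0 := by simp
  rw [this, Real.exp_zero, one_mul]
  exact abs_exp_I_sub_one _

lemma ibp_core (κ μ b c : ℝ) (hb : 0 < b) (hbc : b ≤ c)
    (hsign : (∀ η ∈ Set.Icc b c, 0 < 2*κ*η + μ ∧ 0 ≤ 4*κ*η + μ)
           ∨ (∀ η ∈ Set.Icc b c, 2*κ*η + μ < 0 ∧ 4*κ*η + μ ≤ 0)) :
    ‖∫ η in b..c, Complex.exp (Complex.I * ((κ*η^2 + μ*η : ℝ) : ℂ)) / η‖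
      ≤ 2/|(2*κ*b+μ)*b| + 2/|(2*κ*c+μ)*c| := by
  have huIcc : Set.uIcc b c = Set.Icc b c := Set.uIcc_of_le hbc
  set d : ℝ → ℝ := fun η => 2*κ*η + μ with hd
  set q : ℝ → ℝ := fun η => (2*κ*η + μ)*η with hq
  set p : ℝ → ℝ := fun η => 4*κ*η + μ with hp
  have hdne : ∀ η ∈ Set.Icc b c, d η ≠ 0 := by
    intro η hη; rcases hsign with h | h
    · exact (h η hη).1.ne'
    · exact (h η hη).1.ne
  have hηne : ∀ η ∈ Set.Icc b c, η ≠ 0 := fun η hη => (hb.trans_le hη.1).ne'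
  have hqne : ∀ η ∈ Set.Icc b c, q η ≠ 0 := fun η hη => mul_ne_zero (hdne η hη) (hηne η hη)
  set v : ℝ → ℂ := fun η => Complex.exp (Complex.I * ((κ*η^2 + μ*η : ℝ) : ℂ)) with hv
  set u : ℝ → ℂ := fun η => -Complex.I * (((q η)⁻¹ : ℝ) : ℂ) with hu
  set u' : ℝ → ℂ := fun η => -Complex.I * ((-(p η)/(q η)^2 : ℝ) : ℂ) with hu'
  set v' : ℝ → ℂ := fun η => Complex.I * (d η : ℂ) * v η with hv'
  have hFd : ∀ η : ℝ, HasDerivAt (fun η => κ*η^2 + μ*η) (d η) η := by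
    intro η
    have h1 : HasDerivAt (fun η : ℝ => κ*η^2 + μ*η) (κ*(2*η^1) + μ*1) η :=
      ((hasDerivAt_pow 2 η).const_mul κ).add ((hasDerivAt_id η).const_mul μ)
    exact h1.congr_deriv (by simp [hd]; ring)
  have hqd : ∀ η : ℝ, HasDerivAt q (p η) η := by
    intro η
    have h1 : HasDerivAt (fun η : ℝ => 2*κ*η^2 + μ*η) (2*κ*(2*η^1) + μ*1) η :=
      ((hasDerivAt_pow 2 η).const_mul (2*κ)).add ((hasDerivAt_id η).const_mul μ)
    have h2 : q = fun η : ℝ => 2*κ*η^2 + μ*η := by funext η; simp only [hq]; ring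
    rw [h2]
    exact h1.congr_deriv (by simp [hp]; ring)
  have hvd : ∀ η : ℝ, HasDerivAt v (v' η) η := by
    intro η
    have h1 := ((hFd η).ofReal_comp.const_mul Complex.I).cexp
    exact h1.congr_deriv (by rw [hv']; ring)
  have hud : ∀ η ∈ Set.Icc b c, HasDerivAt u (u' η) η := by
    intro η hη
    have h1 : HasDerivAt (fun η => (q η)⁻¹) (-(p η)/(q η)^2) η := (hqd η).inv (hqne η hη)
    exact (h1.ofReal_comp).const_mul (-Complex.I)
  -- continuity facts
  have hqcont : Continuous q := by fun_prop
  have hpcont : Continuous p := by fun_prop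
  have hvcont : Continuous v := by fun_prop
  have hu'cont : ContinuousOn u' (Set.Icc b c) := by
    apply ContinuousOn.mul continuousOn_const
    apply Complex.continuous_ofReal.comp_continuousOn
    exact ContinuousOn.div (hpcont.continuousOn.neg) (hqcont.pow 2).continuousOn
      (fun η hη => pow_ne_zero 2 (hqne η hη))
  have hv'int : IntervalIntegrable v' volume b c := (by fun_prop : Continuous v').intervalIntegrable _ _
  have hu'int : IntervalIntegrable u' volume b c := (hu'cont.mono (by rw [huIcc])).intervalIntegrable

  have hIBP := intervalIntegral.integral_mul_deriv_eq_deriv_mul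
      (fun x hx => hud x (huIcc ▸ hx)) (fun x _ => hvd x) hu'int hv'int
  have hcongr : Set.EqOn (fun η : ℝ => v η / η) (fun η => u η * v' η) (Set.uIcc b c) := by
    intro x hx
    rw [huIcc] at hx
    have hd0 : (d x : ℂ) ≠ 0 := Complex.ofReal_ne_zero.mpr (hdne x hx)
    have hx0 : (x : ℂ) ≠ 0 := Complex.ofReal_ne_zero.mpr (hηne x hx)
    have hqx : ((q x : ℝ) : ℂ) = (d x : ℂ) * (x : ℂ) := by
      simp only [hq, hd]; push_cast; ring
    simp only [hu, hv']
    push_cast [hqx]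
    field_simp
    linear_combination (v x) * Complex.I_mul_I
  have hmain : (∫ η in b..c, v η / η) = u c * v c - u b * v b - ∫ η in b..c, u' η * v η := by
    rw [intervalIntegral.integral_congr hcongr, hIBP]
  have hnu : ∀ η, ‖u η‖ = |q η|⁻¹ := by
    intro η; simp [hu, Complex.norm_real, abs_inv]
  have hnv : ∀ η, ‖v η‖ = 1 := by
    intro η
    simp only [hv]
    rw [Complex.norm_exp]
    simp only [Complex.mul_re, Complex.I_re, Complex.I_im, Complex.ofReal_im, Complex.ofReal_re]
    norm_num
  have hnu' : ∀ η, ‖u' η * v η‖ = |p η| / (q η)^2 := by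
    intro η
    rw [norm_mul, hnv, mul_one]
    simp only [hu']
    rw [norm_mul, Complex.norm_real]
    simp [abs_div, abs_neg, abs_of_nonneg (sq_nonneg (q η)), Real.norm_eq_abs]
  -- FTC for the correction term
  have hw : ∀ η ∈ Set.Icc b c, HasDerivAt (fun η => -(q η)⁻¹) (p η / (q η)^2) η := by
    intro η hη
    have h1 : HasDerivAt (fun η => (q η)⁻¹) (-(p η)/(q η)^2) η := (hqd η).inv (hqne η hη)
    have h2 := h1.neg
    exact h2.congr_deriv (by ring)
  have hpq_cont : ContinuousOn (fun η => p η / (q η)^2) (Set.Icc b c) :=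
    ContinuousOn.div hpcont.continuousOn (hqcont.pow 2).continuousOn
      (fun η hη => pow_ne_zero 2 (hqne η hη))
  have hpq_int : IntervalIntegrable (fun η => p η / (q η)^2) volume b c :=
    (hpq_cont.mono (by rw [huIcc])).intervalIntegrable
  have hFTC : (∫ η in b..c, p η / (q η)^2) = (q b)⁻¹ - (q c)⁻¹ := by
    rw [intervalIntegral.integral_eq_sub_of_hasDerivAt (fun x hx => hw x (huIcc ▸ hx)) hpq_int]
    ring
  have hcorr : (∫ η in b..c, ‖u' η * v η‖) ≤ 1/|q b| + 1/|q c| := by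
    have habs : (∫ η in b..c, ‖u' η * v η‖) = ∫ η in b..c, |p η| / (q η)^2 := by
      apply intervalIntegral.integral_congr
      intro x _; exact hnu' x
    rw [habs]
    rcases hsign with h | h
    · have : Set.EqOn (fun η : ℝ => |p η| / (q η)^2) (fun η => p η / (q η)^2) (Set.uIcc b c) := by
        intro x hx; rw [huIcc] at hx
        simp only; rw [abs_of_nonneg (h x hx).2]
      rw [intervalIntegral.integral_congr this, hFTC]
      have h1 : (q b)⁻¹ ≤ |q b|⁻¹ := by
        rw [← abs_inv]; exact le_abs_self _
      have h2 : -(q c)⁻¹ ≤ |q c|⁻¹ := by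
        rw [← abs_inv, ← abs_neg]; exact le_abs_self _
      have := add_le_add h1 h2
      simp only [one_div]; linarith
    · have : Set.EqOn (fun η : ℝ => |p η| / (q η)^2) (fun η => -(p η / (q η)^2)) (Set.uIcc b c) := by
        intro x hx; rw [huIcc] at hx
        simp only; rw [abs_of_nonpos (h x hx).2]; ring
      rw [intervalIntegral.integral_congr this, intervalIntegral.integral_neg, hFTC]
      have h1 : -(q b)⁻¹ ≤ |q b|⁻¹ := by
        rw [← abs_inv, ← abs_neg]; exact le_abs_self _
      have h2 : (q c)⁻¹ ≤ |q c|⁻¹ := by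
        rw [← abs_inv]; exact le_abs_self _
      simp only [one_div]; linarith
  -- assemble
  have hgoal_eq : (∫ η in b..c, Complex.exp (Complex.I * ((κ*η^2 + μ*η : ℝ) : ℂ)) / η)
      = ∫ η in b..c, v η / η := rfl
  rw [hgoal_eq, hmain]
  have step1 : ‖u c * v c - u b * v b - ∫ η in b..c, u' η * v η‖
      ≤ ‖u c * v c‖ + ‖u b * v b‖ + ‖∫ η in b..c, u' η * v η‖ := by
    calc ‖u c * v c - u b * v b - ∫ η in b..c, u' η * v η‖
        ≤ ‖u c * v c - u b * v b‖ + ‖∫ η in b..c, u' η * v η‖ := norm_sub_le _ _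
      _ ≤ ‖u c * v c‖ + ‖u b * v b‖ + ‖∫ η in b..c, u' η * v η‖ := by
          have := norm_sub_le (u c * v c) (u b * v b); linarith
  have step2 : ‖∫ η in b..c, u' η * v η‖ ≤ 1/|q b| + 1/|q c| :=
    (intervalIntegral.norm_integral_le_integral_norm hbc).trans hcorr
  have hqb : |q b| = |(2*κ*b+μ)*b| := rfl
  have hqc : |q c| = |(2*κ*c+μ)*c| := rfl
  have hm1 : ‖u c * v c‖ = |q c|⁻¹ :=
    (norm_mul (u c) (v c)).trans (by rw [hnu, hnv, mul_one])
  have hm2 : ‖u b * v b‖ = |q b|⁻¹ :=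
    (norm_mul (u b) (v b)).trans (by rw [hnu, hnv, mul_one])
  calc ‖u c * v c - u b * v b - ∫ η in b..c, u' η * v η‖
      ≤ ‖u c * v c‖ + ‖u b * v b‖ + ‖∫ η in b..c, u' η * v η‖ := step1
    _ ≤ |q c|⁻¹ + |q b|⁻¹ + (1/|q b| + 1/|q c|) := by
        rw [hm1, hm2]; linarith
    _ = 2/|(2*κ*b+μ)*b| + 2/|(2*κ*c+μ)*c| := by
        rw [← hqb, ← hqc]; ring


set_option maxHeartbeats 2000000 in
/-- There is an absolute constant `C` such that for all `ξ > 0`, `κ > 0` and `a ∈ (0,1/2)`,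
the principal value integral `p.v. ∫_{-aξ}^{aξ} e^{i(η²+2ξη)κ}/η dη` exists (as the limit
as `ε → 0+` of the integrals over `{ε ≤ |η| ≤ aξ}`) and is bounded in absolute value by `C`. -/
theorem pv_oscillatory_integral_bound :
    ∃ C : ℝ, ∀ ξ κ a : ℝ, 0 < ξ → 0 < κ → a ∈ Set.Ioo (0 : ℝ) (1 / 2) →
      ∃ L : ℂ,
        Filter.Tendsto
          (fun ε : ℝ => ∫ η in {η : ℝ | ε ≤ |η| ∧ |η| ≤ a * ξ},
            Complex.exp (Complex.I * (((η ^ 2 + 2 * ξ * η) * κ : ℝ) : ℂ)) / (η : ℂ))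
          (nhdsWithin 0 (Set.Ioi 0)) (nhds L)
        ∧ ‖L‖ ≤ C := by
  refine ⟨12, fun ξ κ a hξ hκ ha => ?_⟩
  obtain ⟨ha0, ha2⟩ := ha
  set r : ℝ := a * ξ with hrdef
  have hr : 0 < r := mul_pos ha0 hξ
  have hr2 : r < ξ / 2 := by
    have := mul_lt_mul_of_pos_right ha2 hξ
    rw [hrdef]; linarith
  set E : ℝ → ℝ → ℂ := fun μ η => Complex.exp (Complex.I * ((κ*η^2 + μ*η : ℝ) : ℂ)) with hE
  set f : ℝ → ℂ :=
    fun η => Complex.exp (Complex.I * (((η ^ 2 + 2 * ξ * η) * κ : ℝ) : ℂ)) / (η : ℂ) with hf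
  set g : ℝ → ℂ := fun η => (E (2*ξ*κ) η - E (-(2*ξ*κ)) η) / (η : ℂ) with hg
  -- f in E-form
  have hfE : ∀ η : ℝ, f η = E (2*ξ*κ) η / η := by
    intro η
    rw [hf, hE]
    simp only
    rw [show (η ^ 2 + 2 * ξ * η) * κ = κ*η^2 + (2*ξ*κ)*η from by ring]
  -- symmetrization identity
  have hsym : ∀ η : ℝ, η ≠ 0 → f η + f (-η) = g η := by
    intro η hη
    have hη' : (η : ℂ) ≠ 0 := Complex.ofReal_ne_zero.mpr hη
    have hEneg : E (2*ξ*κ) (-η) = E (-(2*ξ*κ)) η := by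
      rw [hE]
      simp only
      rw [show κ*(-η)^2 + (2*ξ*κ)*(-η) = κ*η^2 + (-(2*ξ*κ))*η from by ring]
    rw [hfE, hfE, hg, hEneg]
    simp only
    rw [Complex.ofReal_neg, div_neg, ← sub_eq_add_neg, ← sub_div]
  -- norm bound on g
  have hgbound : ∀ η : ℝ, ‖g η‖ ≤ 4*ξ*κ := by
    intro η
    rcases eq_or_ne η 0 with h0 | h0
    · simp [hg, h0, hE]
      positivity
    · rw [hg]
      simp only
      rw [norm_div, Complex.norm_real]
      rw [div_le_iff₀ (by simpa using norm_pos_iff.mpr h0 : (0:ℝ) < ‖η‖)]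
      have h1 : ‖E (2*ξ*κ) η - E (-(2*ξ*κ)) η‖
          ≤ |(κ*η^2 + (2*ξ*κ)*η) - (κ*η^2 + (-(2*ξ*κ))*η)| := abs_exp_I_sub_exp_I _ _
      have h2 : |(κ*η^2 + (2*ξ*κ)*η) - (κ*η^2 + (-(2*ξ*κ))*η)| = 4*ξ*κ*|η| := by
        rw [show (κ*η^2 + (2*ξ*κ)*η) - (κ*η^2 + (-(2*ξ*κ))*η) = (4*ξ*κ)*η from by ring,
          abs_mul, abs_of_nonneg (by positivity : (0:ℝ) ≤ 4*ξ*κ)]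
      rw [Real.norm_eq_abs]
      calc ‖E (2*ξ*κ) η - E (-(2*ξ*κ)) η‖ ≤ |(κ*η^2 + (2*ξ*κ)*η) - (κ*η^2 + (-(2*ξ*κ))*η)| := h1
        _ = 4*ξ*κ*|η| := h2
  -- measurability and integrability of g on [0, r]
  have hEcont : ∀ μ : ℝ, Continuous (E μ) := by
    intro μ; rw [hE]; fun_prop
  have hgmeas : Measurable g := by
    apply Measurable.div
    · exact ((hEcont _).sub (hEcont _)).measurable
    · exact Complex.measurable_ofReal
  have hgint : IntervalIntegrable g volume 0 r := by
    rw [intervalIntegrable_iff_integrableOn_Ioc_of_le hr.le]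
    have hconst : IntegrableOn (fun _ : ℝ => (4*ξ*κ : ℝ)) (Set.Ioc 0 r) volume :=
      integrableOn_const measure_Ioc_lt_top.ne
    apply Integrable.mono' hconst (hgmeas.aestronglyMeasurable.restrict)
    exact Filter.Eventually.of_forall (fun η => hgbound η)
  set L : ℂ := ∫ η in (0:ℝ)..r, g η with hL
  refine ⟨L, ?_, ?_⟩
  · -- Tendsto part
    have hev : ∀ᶠ ε in nhdsWithin (0:ℝ) (Set.Ioi 0),
        (∫ η in {η : ℝ | ε ≤ |η| ∧ |η| ≤ r},
          Complex.exp (Complex.I * (((η ^ 2 + 2 * ξ * η) * κ : ℝ) : ℂ)) / (η : ℂ))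
          = ∫ η in ε..r, g η := by
      filter_upwards [Ioo_mem_nhdsGT_of_mem (Set.left_mem_Ico.mpr hr)] with ε hε
      obtain ⟨hε0, hεr⟩ := hε
      have hset : {η : ℝ | ε ≤ |η| ∧ |η| ≤ r} = Set.Icc (-r) (-ε) ∪ Set.Icc ε r := by
        ext x
        simp only [Set.mem_setOf_eq, Set.mem_union, Set.mem_Icc, le_abs, abs_le]
        constructor
        · rintro ⟨h1 | h1, h2, h3⟩
          · right; exact ⟨h1, h3⟩
          · left; constructor <;> [exact h2; linarith]
        · rintro (⟨h1, h2⟩ | ⟨h1, h2⟩)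
          · exact ⟨Or.inr (by linarith), by linarith, by linarith⟩
          · exact ⟨Or.inl h1, by linarith, h2⟩
      have hfc : ∀ s : Set ℝ, (0 : ℝ) ∉ s → ContinuousOn f s := by
        intro s hs
        rw [hf]
        apply ContinuousOn.div
        · fun_prop
        · fun_prop
        · intro x hx
          exact Complex.ofReal_ne_zero.mpr (fun h => hs (h ▸ hx))
      have hi1 : IntegrableOn f (Set.Icc (-r) (-ε)) volume :=
        (hfc _ (by simp only [Set.mem_Icc]; intro ⟨_, h⟩; linarith)).integrableOn_Icc
      have hi2 : IntegrableOn f (Set.Icc ε r) volume :=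
        (hfc _ (by simp only [Set.mem_Icc]; intro ⟨h, _⟩; linarith)).integrableOn_Icc
      have hdisj : Disjoint (Set.Icc (-r) (-ε)) (Set.Icc ε r) := by
        apply Set.disjoint_left.mpr
        intro x hx1 hx2
        rw [Set.mem_Icc] at hx1 hx2
        linarith
      calc (∫ η in {η : ℝ | ε ≤ |η| ∧ |η| ≤ r}, f η)
          = ∫ η in (Set.Icc (-r) (-ε) ∪ Set.Icc ε r), f η := by rw [hset]
        _ = (∫ η in Set.Icc (-r) (-ε), f η) + ∫ η in Set.Icc ε r, f η :=
            setIntegral_union hdisj measurableSet_Icc hi1 hi2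
        _ = (∫ η in (-r)..(-ε), f η) + ∫ η in ε..r, f η := by
            rw [intervalIntegral.integral_of_le (by linarith : -r ≤ -ε),
              intervalIntegral.integral_of_le (by linarith : ε ≤ r),
              MeasureTheory.integral_Icc_eq_integral_Ioc,
              MeasureTheory.integral_Icc_eq_integral_Ioc]
        _ = (∫ η in ε..r, f (-η)) + ∫ η in ε..r, f η := by
            rw [intervalIntegral.integral_comp_neg (a := ε) (b := r) (f := f)]
        _ = ∫ η in ε..r, (f (-η) + f η) := by
            rw [← intervalIntegral.integral_add]
            · apply ContinuousOn.intervalIntegrable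
              apply (hfc {x : ℝ | x ≠ 0} (by simp)).comp (by fun_prop : Continuous fun x : ℝ => -x).continuousOn
              intro x hx
              rw [Set.uIcc_of_le (by linarith : ε ≤ r)] at hx
              simp only [Set.mem_setOf_eq]
              intro h
              have : x = 0 := by linarith [neg_eq_zero.mp h]
              linarith [hx.1]
            · apply ContinuousOn.intervalIntegrable
              apply (hfc {x : ℝ | x ≠ 0} (by simp)).mono
              intro x hx
              rw [Set.uIcc_of_le (by linarith : ε ≤ r)] at hx
              simp only [Set.mem_setOf_eq]
              intro h; rw [h] at hx; linarith [hx.1]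
        _ = ∫ η in ε..r, g η := by
            apply intervalIntegral.integral_congr
            intro x hx
            rw [Set.uIcc_of_le (by linarith : ε ≤ r)] at hx
            simp only
            rw [add_comm]
            exact hsym x (by intro h; rw [h] at hx; linarith [hx.1])
    have hmain : Filter.Tendsto (fun ε : ℝ => ∫ η in ε..r, g η)
        (nhdsWithin 0 (Set.Ioi 0)) (nhds L) := by
      have hzero : Filter.Tendsto (fun ε : ℝ => ∫ η in (0:ℝ)..ε, g η)
          (nhdsWithin 0 (Set.Ioi 0)) (nhds 0) := by
        apply squeeze_zero_norm' (a := fun ε : ℝ => 4*ξ*κ*ε)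
        · filter_upwards [Ioo_mem_nhdsGT_of_mem (Set.left_mem_Ico.mpr hr)] with ε hε
          have := intervalIntegral.norm_integral_le_of_norm_le_const
            (a := 0) (b := ε) (C := 4*ξ*κ) (f := g) (fun x _ => hgbound x)
          calc ‖∫ η in (0:ℝ)..ε, g η‖ ≤ 4*ξ*κ * |ε - 0| := this
            _ = 4*ξ*κ*ε := by rw [sub_zero, abs_of_pos hε.1]
        · have : Filter.Tendsto (fun ε : ℝ => 4*ξ*κ*ε) (nhds 0) (nhds (4*ξ*κ*0)) :=
            (continuous_const.mul continuous_id).tendsto 0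
          rw [mul_zero] at this
          exact this.mono_left nhdsWithin_le_nhds
      have heq : ∀ᶠ ε in nhdsWithin (0:ℝ) (Set.Ioi 0),
          L - (∫ η in (0:ℝ)..ε, g η) = ∫ η in ε..r, g η := by
        filter_upwards [Ioo_mem_nhdsGT_of_mem (Set.left_mem_Ico.mpr hr)] with ε hε
        rw [hL]
        exact intervalIntegral.integral_interval_sub_left hgint
          (hgint.mono_set (by
            rw [Set.uIcc_of_le hr.le, Set.uIcc_of_le hε.1.le]
            exact Set.Icc_subset_Icc le_rfl hε.2.le))
      have := (tendsto_const_nhds.sub hzero : Filter.Tendsto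
        (fun ε : ℝ => L - ∫ η in (0:ℝ)..ε, g η) (nhdsWithin 0 (Set.Ioi 0)) (nhds (L - 0)))
      rw [sub_zero] at this
      exact this.congr' heq
    exact hmain.congr' (by filter_upwards [hev] with ε h using h.symm) |>.congr'
      (Filter.Eventually.of_forall fun ε => rfl)
  · -- the bound
    by_cases hcase : r ≤ 1/(ξ*κ)
    · have h1 := intervalIntegral.norm_integral_le_of_norm_le_const
        (a := 0) (b := r) (C := 4*ξ*κ) (f := g) (fun x _ => hgbound x)
      rw [hL]
      have h2 : 4*ξ*κ * |r - 0| ≤ 4 := by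
        rw [sub_zero, abs_of_pos hr]
        calc 4*ξ*κ*r ≤ 4*ξ*κ*(1/(ξ*κ)) := by
              apply mul_le_mul_of_nonneg_left hcase (by positivity)
          _ = 4 := by field_simp
      linarith [h1.trans h2]
    · push_neg at hcase
      set b : ℝ := 1/(ξ*κ) with hbdef
      have hbpos : 0 < b := by positivity
      have hbr : b < r := hcase
      have hint1 : IntervalIntegrable g volume 0 b :=
        hgint.mono_set (by
          rw [Set.uIcc_of_le hr.le, Set.uIcc_of_le hbpos.le]
          exact Set.Icc_subset_Icc le_rfl hbr.le)
      have hint2 : IntervalIntegrable g volume b r :=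
        hgint.mono_set (by
          rw [Set.uIcc_of_le hr.le, Set.uIcc_of_le hbr.le]
          exact Set.Icc_subset_Icc hbpos.le le_rfl)
      have hsplit : L = (∫ η in (0:ℝ)..b, g η) + ∫ η in b..r, g η := by
        rw [hL, intervalIntegral.integral_add_adjacent_intervals hint1 hint2]
      have hbnd1 : ‖∫ η in (0:ℝ)..b, g η‖ ≤ 4 := by
        have h1 := intervalIntegral.norm_integral_le_of_norm_le_const
          (a := 0) (b := b) (C := 4*ξ*κ) (f := g) (fun x _ => hgbound x)
        have h2 : 4*ξ*κ * |b - 0| = 4 := by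
          rw [sub_zero, abs_of_pos hbpos, hbdef]
          field_simp
        linarith [h1.trans_eq h2]
      -- split g into two oscillatory integrals on [b, r]
      have hExcont : ∀ μ : ℝ, ContinuousOn (fun η : ℝ => E μ η / η) (Set.uIcc b r) := by
        intro μ
        rw [Set.uIcc_of_le hbr.le]
        apply ContinuousOn.div (hEcont μ).continuousOn (by fun_prop)
        intro x hx
        exact Complex.ofReal_ne_zero.mpr (by rintro rfl; exact absurd hx.1 (not_le.mpr hbpos))
      have hgsplit : (∫ η in b..r, g η)
          = (∫ η in b..r, E (2*ξ*κ) η / η) - ∫ η in b..r, E (-(2*ξ*κ)) η / η := by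
        rw [← intervalIntegral.integral_sub ((hExcont _).intervalIntegrable)
          ((hExcont _).intervalIntegrable)]
        apply intervalIntegral.integral_congr
        intro x hx
        simp only [hg]
        rw [sub_div]
      have hIbp1 : ‖∫ η in b..r, E (2*ξ*κ) η / η‖
          ≤ 2/|(2*κ*b+2*ξ*κ)*b| + 2/|(2*κ*r+2*ξ*κ)*r| := by
        apply ibp_core κ (2*ξ*κ) b r hbpos hbr.le
        left
        intro η hη
        have h1 : b ≤ η := hη.1
        constructor
        · nlinarith [mul_pos hκ (hbpos.trans_le h1), mul_pos hξ hκ]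
        · nlinarith [mul_pos hκ (hbpos.trans_le h1), mul_pos hξ hκ]
      have hIbp2 : ‖∫ η in b..r, E (-(2*ξ*κ)) η / η‖
          ≤ 2/|(2*κ*b+(-(2*ξ*κ)))*b| + 2/|(2*κ*r+(-(2*ξ*κ)))*r| := by
        apply ibp_core κ (-(2*ξ*κ)) b r hbpos hbr.le
        right
        intro η hη
        have hη2 : η ≤ r := hη.2
        have hηξ : η < ξ/2 := lt_of_le_of_lt hη2 hr2
        constructor
        · nlinarith [mul_pos hκ hξ]
        · nlinarith [mul_pos hκ hξ]
      -- numeric bounds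
      have hξκb : ξ*κ*b = 1 := by rw [hbdef]; field_simp
      have hq1b : (2 : ℝ) ≤ |(2*κ*b+2*ξ*κ)*b| := by
        have hnn : (0:ℝ) ≤ (2*κ*b+2*ξ*κ)*b := by
          nlinarith [mul_pos (mul_pos hκ hbpos) hbpos, mul_pos (mul_pos hξ hκ) hbpos]
        rw [abs_of_nonneg hnn]
        nlinarith [mul_pos (mul_pos hκ hbpos) hbpos, hξκb]
      have hq1r : (2 : ℝ) ≤ |(2*κ*r+2*ξ*κ)*r| := by
        have hnn : (0:ℝ) ≤ (2*κ*r+2*ξ*κ)*r := by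
          nlinarith [mul_pos (mul_pos hκ hr) hr, mul_pos (mul_pos hξ hκ) hr]
        rw [abs_of_nonneg hnn]
        nlinarith [mul_pos (mul_pos hκ hr) hr, hξκb,
          mul_nonneg (mul_pos hξ hκ).le (sub_nonneg.mpr hbr.le)]
      have hq2b : (1 : ℝ) ≤ |(2*κ*b+(-(2*ξ*κ)))*b| := by
        have hbξ : b < ξ/2 := hbr.trans hr2
        have hnp : (2*κ*b+(-(2*ξ*κ)))*b ≤ 0 := by
          nlinarith [mul_nonneg (mul_pos hκ hbpos).le (by linarith : (0:ℝ) ≤ ξ - b)]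
        rw [abs_of_nonpos hnp]
        nlinarith [hξκb, mul_nonneg (mul_pos hκ hbpos).le (by linarith : (0:ℝ) ≤ ξ/2 - b)]
      have hq2r : (1 : ℝ) ≤ |(2*κ*r+(-(2*ξ*κ)))*r| := by
        have hnp : (2*κ*r+(-(2*ξ*κ)))*r ≤ 0 := by
          nlinarith [mul_nonneg (mul_pos hκ hr).le (by linarith : (0:ℝ) ≤ ξ - r)]
        rw [abs_of_nonpos hnp]
        nlinarith [hξκb, mul_nonneg (mul_pos hκ hr).le (by linarith : (0:ℝ) ≤ ξ - 2*r),
          mul_nonneg (mul_nonneg hκ.le (sub_nonneg.mpr hbr.le)) hξ.le]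
      have hdiv : ∀ x : ℝ, (1:ℝ) ≤ x → 2/x ≤ 2 := by
        intro x hx
        rw [div_le_iff₀ (by linarith)]
        nlinarith
      have hdiv2 : ∀ x : ℝ, (2:ℝ) ≤ x → 2/x ≤ 1 := by
        intro x hx
        rw [div_le_one (by linarith)]
        exact hx
      have hbnd2 : ‖∫ η in b..r, g η‖ ≤ 8 := by
        rw [hgsplit]
        calc ‖(∫ η in b..r, E (2*ξ*κ) η / η) - ∫ η in b..r, E (-(2*ξ*κ)) η / η‖
            ≤ ‖∫ η in b..r, E (2*ξ*κ) η / η‖ + ‖∫ η in b..r, E (-(2*ξ*κ)) η / η‖ :=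
              norm_sub_le _ _
          _ ≤ (2/|(2*κ*b+2*ξ*κ)*b| + 2/|(2*κ*r+2*ξ*κ)*r|)
              + (2/|(2*κ*b+(-(2*ξ*κ)))*b| + 2/|(2*κ*r+(-(2*ξ*κ)))*r|) := add_le_add hIbp1 hIbp2
          _ ≤ (1 + 1) + (2 + 2) := by
              have := hdiv2 _ hq1b
              have := hdiv2 _ hq1r
              have := hdiv _ hq2b
              have := hdiv _ hq2r
              linarith
          _ ≤ 8 := by norm_num
      rw [hsplit]
      calc ‖(∫ η in (0:ℝ)..b, g η) + ∫ η in b..r, g η‖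
          ≤ ‖∫ η in (0:ℝ)..b, g η‖ + ‖∫ η in b..r, g η‖ := norm_add_le _ _
        _ ≤ 4 + 8 := add_le_add hbnd1 hbnd2
        _ = 12 := by norm_num
end

section
/- Let φ(η) = ∫₀^∞ e^{-a - η/a} da for η > 0. Then the function η ↦ φ(η) + φ'(η) has at most one zero on (0,∞). -/
open MeasureTheory Set

noncomputable section

/-- `φ(η) = ∫₀^∞ e^{-a - η/a} da`. -/
def φ (η : ℝ) : ℝ := ∫ a in Set.Ioi (0 : ℝ), Real.exp (-a - η / a)

namespace PhiAux

/-- The integrand. -/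
def F (η a : ℝ) : ℝ := Real.exp (-a - η / a)

/-- `-φ'`. -/
def ψ (η : ℝ) : ℝ := ∫ a in Set.Ioi (0 : ℝ), F η a / a

/-- `φ''`. -/
def χ (η : ℝ) : ℝ := ∫ a in Set.Ioi (0 : ℝ), F η a / a ^ 2

lemma F_pos (η a : ℝ) : 0 < F η a := Real.exp_pos _

lemma measF (η : ℝ) : Measurable (F η) := by
  unfold F
  exact Real.measurable_exp.comp ((measurable_id.neg).sub (measurable_const.div measurable_id))

lemma sbound1 {s : ℝ} (_ : 0 ≤ s) : Real.exp (-s) * s ≤ 1 := by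
  have h1 : s + 1 ≤ Real.exp s := Real.add_one_le_exp s
  have h3 : (0:ℝ) < Real.exp s := Real.exp_pos s
  have : Real.exp (-s) * s = s / Real.exp s := by rw [Real.exp_neg]; ring
  rw [this, div_le_one h3]; linarith

lemma sbound2 {s : ℝ} (hs : 0 ≤ s) : Real.exp (-s) * s ^ 2 ≤ 4 := by
  have h1 : s / 2 + 1 ≤ Real.exp (s / 2) := Real.add_one_le_exp (s / 2)
  have h2 : Real.exp (s / 2) * Real.exp (s / 2) = Real.exp s := by
    rw [← Real.exp_add]; ring_nf
  have h3 : (0:ℝ) < Real.exp s := Real.exp_pos s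
  have : Real.exp (-s) * s ^ 2 = s ^ 2 / Real.exp s := by rw [Real.exp_neg]; ring
  rw [this, div_le_iff₀ h3]
  nlinarith [h1, h2, Real.exp_pos (s / 2)]

lemma F_split (η a : ℝ) : F η a = Real.exp (-a) * Real.exp (-(η / a)) := by
  rw [F, ← Real.exp_add]; ring_nf

lemma F_le {η a : ℝ} (hη : 0 ≤ η) (ha : 0 < a) : F η a ≤ Real.exp (-a) := by
  apply Real.exp_le_exp.2
  have : 0 ≤ η / a := div_nonneg hη ha.le
  linarith

lemma F_div_le {η a : ℝ} (hη : 0 < η) (ha : 0 < a) :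
    F η a / a ≤ Real.exp (-a) * η⁻¹ := by
  have h1 := sbound1 (s := η / a) (div_nonneg hη.le ha.le)
  have key : Real.exp (-(η / a)) / a ≤ η⁻¹ := by
    have heq : Real.exp (-(η / a)) / a = (Real.exp (-(η / a)) * (η / a)) * η⁻¹ := by
      field_simp
    rw [heq]
    calc (Real.exp (-(η / a)) * (η / a)) * η⁻¹ ≤ 1 * η⁻¹ := by
          apply mul_le_mul_of_nonneg_right h1 (by positivity)
      _ = η⁻¹ := one_mul _
  calc F η a / a = Real.exp (-a) * (Real.exp (-(η / a)) / a) := by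
        rw [F_split]; ring
    _ ≤ Real.exp (-a) * η⁻¹ :=
        mul_le_mul_of_nonneg_left key (Real.exp_pos _).le

lemma F_div_sq_le {η a : ℝ} (hη : 0 < η) (ha : 0 < a) :
    F η a / a ^ 2 ≤ Real.exp (-a) * (4 * (η ^ 2)⁻¹) := by
  have h1 := sbound2 (s := η / a) (div_nonneg hη.le ha.le)
  have key : Real.exp (-(η / a)) / a ^ 2 ≤ 4 * (η ^ 2)⁻¹ := by
    have heq : Real.exp (-(η / a)) / a ^ 2
        = (Real.exp (-(η / a)) * (η / a) ^ 2) * (η ^ 2)⁻¹ := by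
      field_simp
    rw [heq]
    exact mul_le_mul_of_nonneg_right h1 (by positivity)
  calc F η a / a ^ 2 = Real.exp (-a) * (Real.exp (-(η / a)) / a ^ 2) := by
        rw [F_split]; ring
    _ ≤ Real.exp (-a) * (4 * (η ^ 2)⁻¹) :=
        mul_le_mul_of_nonneg_left key (Real.exp_pos _).le

lemma int_exp : IntegrableOn (fun a => Real.exp (-a)) (Ioi (0:ℝ)) := by
  simpa using exp_neg_integrableOn_Ioi 0 (one_pos)

lemma integrable_of_bound {g : ℝ → ℝ} (hm : Measurable g) (C : ℝ)
    (hb : ∀ a ∈ Ioi (0:ℝ), ‖g a‖ ≤ Real.exp (-a) * C) :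
    IntegrableOn g (Ioi (0:ℝ)) := by
  apply Integrable.mono' (int_exp.mul_const C) hm.aestronglyMeasurable
  filter_upwards [ae_restrict_mem measurableSet_Ioi] with a ha using hb a ha

lemma int0 {η : ℝ} (hη : 0 < η) : IntegrableOn (fun a => F η a) (Ioi (0:ℝ)) := by
  refine integrable_of_bound (measF η) 1 (fun a ha => ?_)
  rw [Real.norm_eq_abs, abs_of_pos (F_pos η a), mul_one]
  exact F_le hη.le (mem_Ioi.mp ha)

lemma int1 {η : ℝ} (hη : 0 < η) : IntegrableOn (fun a => F η a / a) (Ioi (0:ℝ)) := by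
  refine integrable_of_bound ((measF η).div measurable_id) η⁻¹ (fun a ha => ?_)
  have ha' := mem_Ioi.mp ha
  rw [Real.norm_eq_abs, abs_of_pos (div_pos (F_pos η a) ha')]
  exact F_div_le hη ha'

lemma int2 {η : ℝ} (hη : 0 < η) : IntegrableOn (fun a => F η a / a ^ 2) (Ioi (0:ℝ)) := by
  refine integrable_of_bound ((measF η).div (measurable_id.pow_const 2)) (4 * (η ^ 2)⁻¹)
    (fun a ha => ?_)
  have ha' := mem_Ioi.mp ha
  rw [Real.norm_eq_abs, abs_of_pos (div_pos (F_pos η a) (by positivity))]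
  exact F_div_sq_le hη ha'

lemma hasDerivAt_F {a : ℝ} (ha : 0 < a) (η : ℝ) :
    HasDerivAt (fun x => F x a) (-(F η a / a)) η := by
  have h : HasDerivAt (fun x : ℝ => -a - x / a) (-(1 / a)) η := by
    simpa using ((hasDerivAt_id η).div_const a).const_sub (-a)
  have := h.exp
  exact this.congr_deriv (by
    change Real.exp (-a - η / a) * -(1 / a) = -(Real.exp (-a - η / a) / a)
    ring)

lemma phi_eq : φ = fun η => ∫ a in Ioi (0:ℝ), F η a := rfl

lemma hasDerivAt_phi {η₀ : ℝ} (h : 0 < η₀) : HasDerivAt φ (-ψ η₀) η₀ := by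
  have key := hasDerivAt_integral_of_dominated_loc_of_deriv_le
    (μ := volume.restrict (Ioi (0:ℝ))) (x₀ := η₀)
    (F := fun x a => F x a) (F' := fun x a => -(F x a / a))
    (bound := fun a => Real.exp (-a) * (2 / η₀)) (s := Metric.ball η₀ (η₀ / 2)) (Metric.ball_mem_nhds _ (half_pos h))
    (Filter.Eventually.of_forall fun x => (measF x).aestronglyMeasurable)
    (int0 h)
    (((measF η₀).div measurable_id).neg.aestronglyMeasurable)
    ?_ (int_exp.mul_const _) ?_
  · rw [phi_eq]
    have h2 := key.2
    rw [integral_neg] at h2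
    exact h2
  · filter_upwards [ae_restrict_mem measurableSet_Ioi] with a ha x hx
    have ha' := mem_Ioi.mp ha
    have hx' : η₀ / 2 < x := by
      have := abs_lt.mp (by simpa [Real.dist_eq] using Metric.mem_ball.mp hx)
      linarith [this.1]
    have hx0 : 0 < x := lt_trans (half_pos h) hx'
    rw [norm_neg, Real.norm_eq_abs, abs_of_pos (div_pos (F_pos x a) ha')]
    calc F x a / a ≤ Real.exp (-a) * x⁻¹ := F_div_le hx0 ha'
      _ ≤ Real.exp (-a) * (2 / η₀) := by
          apply mul_le_mul_of_nonneg_left _ (Real.exp_pos _).le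
          rw [div_eq_mul_inv 2 η₀]
          rw [inv_le_comm₀ hx0 (by positivity)]
          · rw [← div_eq_mul_inv] at *
            rw [inv_div]
            linarith
  · filter_upwards [ae_restrict_mem measurableSet_Ioi] with a ha x _
    exact hasDerivAt_F (mem_Ioi.mp ha) x

lemma hasDerivAt_psi {η₀ : ℝ} (h : 0 < η₀) : HasDerivAt ψ (-χ η₀) η₀ := by
  have key := hasDerivAt_integral_of_dominated_loc_of_deriv_le
    (μ := volume.restrict (Ioi (0:ℝ))) (x₀ := η₀)
    (F := fun x a => F x a / a) (F' := fun x a => -(F x a / a ^ 2))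
    (bound := fun a => Real.exp (-a) * (16 / η₀ ^ 2)) (s := Metric.ball η₀ (η₀ / 2)) (Metric.ball_mem_nhds _ (half_pos h))
    (Filter.Eventually.of_forall fun x => ((measF x).div measurable_id).aestronglyMeasurable)
    (int1 h)
    (((measF η₀).div (measurable_id.pow_const 2)).neg.aestronglyMeasurable)
    ?_ (int_exp.mul_const _) ?_
  · have h2 := key.2
    rw [integral_neg] at h2
    exact h2
  · filter_upwards [ae_restrict_mem measurableSet_Ioi] with a ha x hx
    have ha' := mem_Ioi.mp ha
    have hx' : η₀ / 2 < x := by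
      have := abs_lt.mp (by simpa [Real.dist_eq] using Metric.mem_ball.mp hx)
      linarith [this.1]
    have hx0 : 0 < x := lt_trans (half_pos h) hx'
    rw [norm_neg, Real.norm_eq_abs, abs_of_pos (div_pos (F_pos x a) (by positivity))]
    calc F x a / a ^ 2 ≤ Real.exp (-a) * (4 * (x ^ 2)⁻¹) := F_div_sq_le hx0 ha'
      _ ≤ Real.exp (-a) * (16 / η₀ ^ 2) := by
          apply mul_le_mul_of_nonneg_left _ (Real.exp_pos _).le
          have h4 : η₀ ^ 2 / 4 ≤ x ^ 2 := by nlinarith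
          have : (x ^ 2)⁻¹ ≤ 4 / η₀ ^ 2 := by
            rw [inv_le_comm₀ (by positivity) (by positivity), inv_div]
            linarith
          calc 4 * (x ^ 2)⁻¹ ≤ 4 * (4 / η₀ ^ 2) := by linarith
            _ = 16 / η₀ ^ 2 := by ring
  · filter_upwards [ae_restrict_mem measurableSet_Ioi] with a ha x _
    have ha' := mem_Ioi.mp ha
    have := (hasDerivAt_F ha' x).div_const a
    exact this.congr_deriv (by rw [neg_div, div_div, sq])

lemma phi_pos {η : ℝ} (hη : 0 < η) : 0 < φ η := by
  rw [phi_eq]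
  rw [setIntegral_pos_iff_support_of_nonneg_ae
    (Filter.Eventually.of_forall fun a => (F_pos η a).le) (int0 hη)]
  have hsub : Ioi (0:ℝ) ⊆ Function.support (fun a => F η a) ∩ Ioi 0 :=
    fun a ha => ⟨(F_pos η a).ne', ha⟩
  calc (0:ENNReal) < ⊤ := ENNReal.zero_lt_top
    _ = volume (Ioi (0:ℝ)) := Real.volume_Ioi.symm
    _ ≤ _ := measure_mono hsub

lemma key_pos {η : ℝ} (hη : 0 < η) : ψ η ^ 2 < χ η * φ η := by
  set m := ψ η / φ η with hm_def
  have hφ := phi_pos hη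
  have expand : EqOn (fun a => F η a * (1 / a - m) ^ 2)
      (fun a => F η a / a ^ 2 - (2 * m) * (F η a / a) + m ^ 2 * F η a) (Ioi 0) := by
    intro a ha
    have ha' : a ≠ 0 := (mem_Ioi.mp ha).ne'
    field_simp
    ring
  set J := ∫ a in Ioi (0:ℝ), F η a * (1 / a - m) ^ 2 with hJ_def
  have i1 : Integrable (fun a => 2 * m * (F η a / a)) (volume.restrict (Ioi (0:ℝ))) :=
    (int1 hη).const_mul _
  have i2 : Integrable (fun a => m ^ 2 * F η a) (volume.restrict (Ioi (0:ℝ))) :=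
    (int0 hη).const_mul _
  have i3 : Integrable (fun a => F η a / a ^ 2 - 2 * m * (F η a / a))
      (volume.restrict (Ioi (0:ℝ))) := (int2 hη).sub i1
  have hint : IntegrableOn (fun a => F η a * (1 / a - m) ^ 2) (Ioi (0:ℝ)) := by
    apply IntegrableOn.congr_fun _ expand.symm measurableSet_Ioi
    exact i3.add i2
  have hJ : J = χ η - 2 * m * ψ η + m ^ 2 * φ η := by
    rw [hJ_def, setIntegral_congr_fun measurableSet_Ioi expand,
      integral_add i3 i2, integral_sub (int2 hη) i1,
      integral_const_mul, integral_const_mul]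
    rfl
  have hJpos : 0 < J := by
    rw [hJ_def]
    rw [setIntegral_pos_iff_support_of_nonneg_ae
      (Filter.Eventually.of_forall fun a => mul_nonneg (F_pos η a).le (sq_nonneg _)) hint]
    have hsub : Ioi (0:ℝ) \ {m⁻¹} ⊆
        Function.support (fun a => F η a * (1 / a - m) ^ 2) ∩ Ioi 0 := by
      rintro a ⟨ha, ha'⟩
      have ha0 := mem_Ioi.mp ha
      refine ⟨?_, ha⟩
      have hne : 1 / a ≠ m := by
        intro h
        have hm0 : 0 < m := h ▸ by positivity
        apply ha'
        have : a = m⁻¹ := by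
          field_simp at h
          field_simp [hm0.ne']
          linarith
        simp [this]
      have : (1 / a - m) ^ 2 ≠ 0 := pow_ne_zero _ (sub_ne_zero.mpr hne)
      exact mul_ne_zero (F_pos η a).ne' this
    have hmeas : volume (Ioi (0:ℝ) \ {m⁻¹}) = ⊤ := by
      rw [measure_diff_null (measure_singleton _), Real.volume_Ioi]
    calc (0:ENNReal) < ⊤ := ENNReal.zero_lt_top
      _ = volume (Ioi (0:ℝ) \ {m⁻¹}) := hmeas.symm
      _ ≤ _ := measure_mono hsub
  have hmφ : m * φ η = ψ η := div_mul_cancel₀ _ hφ.ne'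
  have hprod : J * φ η = χ η * φ η - 2 * (m * φ η) * ψ η + (m * φ η) ^ 2 := by
    rw [hJ]; ring
  rw [hmφ] at hprod
  have h1 : 0 < J * φ η := mul_pos hJpos hφ
  nlinarith [h1, hprod]

end PhiAux

open PhiAux in
/-- The function `η ↦ φ(η) + φ'(η)` has at most one zero on `(0,∞)`. -/
theorem phi_plus_phi'_at_most_one_zero :
    ∀ η₁ ∈ Set.Ioi (0 : ℝ), ∀ η₂ ∈ Set.Ioi (0 : ℝ),
      φ η₁ + deriv φ η₁ = 0 → φ η₂ + deriv φ η₂ = 0 → η₁ = η₂ := by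
  intro η₁ h₁ η₂ h₂ e₁ e₂
  set g : ℝ → ℝ := fun η => -(ψ η / φ η) with hg
  have hD : ∀ η ∈ Ioi (0:ℝ), HasDerivAt g ((χ η * φ η - ψ η ^ 2) / (φ η) ^ 2) η := by
    intro η hη
    have hη' := mem_Ioi.mp hη
    have hd := ((hasDerivAt_psi hη').fun_div (hasDerivAt_phi hη') (phi_pos hη').ne').neg
    exact hd.congr_deriv (by ring)
  have hmono : StrictMonoOn g (Ioi (0:ℝ)) := by
    apply strictMonoOn_of_deriv_pos (convex_Ioi 0)
    · intro η hη
      exact (hD η hη).differentiableAt.continuousAt.continuousWithinAt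
    · intro η hη
      rw [interior_Ioi] at hη
      rw [(hD η hη).deriv]
      have hη' := mem_Ioi.mp hη
      exact div_pos (sub_pos.2 (key_pos hη')) (pow_pos (phi_pos hη') 2)
  have hval : ∀ η ∈ Ioi (0:ℝ), φ η + deriv φ η = 0 → g η = -1 := by
    intro η hη he
    have hη' := mem_Ioi.mp hη
    have hdφ : deriv φ η = -(ψ η) := (hasDerivAt_phi hη').deriv
    rw [hdφ] at he
    have hψφ : ψ η = φ η := by linarith
    simp [hg, hψφ, div_self (phi_pos hη').ne']
  exact hmono.injOn h₁ h₂ ((hval η₁ h₁ e₁).trans (hval η₂ h₂ e₂).symm)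
end
end
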